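/- arXiv:2005.09995 — 3 statements merged into one kernel-verified Lean document; each statement's English description precedes it below -/
import Mathlib

section
/- Let H be a Hilbert space, (Ω, μ) a measure space, and F : Ω → H an integral frame with bounds A, B > 0 and frame operator S satisfying ⟪S x, x⟫ = ∫_Ω |⟪x, F ω⟫|² dμ(ω) for all x. Then A‖x‖² ≤ ⟪S x, x⟫ ≤ B‖x‖² for all x ∈ H; in particular S is a positive operator and S is bijective (invertible). -/
open MeasureTheory
open scoped InnerProductSpace

local notation "⟪" x ", " y "⟫" => @inner ℂ _ _ x y

/-- If `F` is an integral frame with bounds `A, B > 0` and frame operator `S`, then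
`A‖x‖² ≤ ⟪S x, x⟫ ≤ B‖x‖²` for all `x`; in particular `S` is positive and bijective. -/
theorem integralFrame_frameOperator_positive_invertible
    {Ω : Type*} [MeasurableSpace Ω] (μ : Measure Ω)
    {H : Type*} [NormedAddCommGroup H] [InnerProductSpace ℂ H] [CompleteSpace H]
    (F : Ω → H) (hmeas : ∀ x : H, Measurable fun ω => ⟪x, F ω⟫)
    (A B : ℝ) (hA : 0 < A) (hB : 0 < B)
    (hframe : ∀ x : H,
      A * ‖x‖ ^ 2 ≤ ∫ ω, ‖⟪x, F ω⟫‖ ^ 2 ∂μ ∧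
      (∫ ω, ‖⟪x, F ω⟫‖ ^ 2 ∂μ) ≤ B * ‖x‖ ^ 2)
    (S : H →L[ℂ] H)
    (hS : ∀ x : H, ⟪S x, x⟫ = ((∫ ω, ‖⟪x, F ω⟫‖ ^ 2 ∂μ : ℝ) : ℂ)) :
    (∀ x : H, A * ‖x‖ ^ 2 ≤ (⟪S x, x⟫).re ∧ (⟪S x, x⟫).re ≤ B * ‖x‖ ^ 2) ∧
    (∀ x : H, 0 ≤ (⟪S x, x⟫).re) ∧ Function.Bijective S := by
  have hre : ∀ x : H, (⟪S x, x⟫).re = ∫ ω, ‖⟪x, F ω⟫‖ ^ 2 ∂μ := by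
    intro x; rw [hS x]; simp
  have hbounds : ∀ x : H, A * ‖x‖ ^ 2 ≤ (⟪S x, x⟫).re ∧ (⟪S x, x⟫).re ≤ B * ‖x‖ ^ 2 := by
    intro x; rw [hre x]; exact hframe x
  have hpos : ∀ x : H, 0 ≤ (⟪S x, x⟫).re := by
    intro x
    exact le_trans (by positivity) (hbounds x).1
  refine ⟨hbounds, hpos, ?_⟩
  -- lower norm bound: A * ‖x‖ ≤ ‖S x‖
  have hlow : ∀ x : H, A * ‖x‖ ≤ ‖S x‖ := by
    intro x
    rcases eq_or_ne x 0 with rfl | hx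
    · simp
    have h1 : A * ‖x‖ ^ 2 ≤ ‖S x‖ * ‖x‖ := by
      calc A * ‖x‖ ^ 2 ≤ (⟪S x, x⟫).re := (hbounds x).1
        _ ≤ ‖⟪S x, x⟫‖ := Complex.re_le_norm _
        _ ≤ ‖S x‖ * ‖x‖ := norm_inner_le_norm _ _
    have hxpos : 0 < ‖x‖ := norm_pos_iff.mpr hx
    nlinarith
  have hinj : Function.Injective S := by
    intro x y hxy
    have h := hlow (x - y)
    rw [map_sub, hxy, sub_self, norm_zero] at h
    have : ‖x - y‖ ≤ 0 := by nlinarith [norm_nonneg (x - y)]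
    have := le_antisymm this (norm_nonneg _)
    rwa [norm_eq_zero, sub_eq_zero] at this
  have hanti : AntilipschitzWith (A⁻¹.toNNReal) S := by
    refine AntilipschitzWith.of_le_mul_dist fun x y => ?_
    rw [dist_eq_norm, dist_eq_norm, ← map_sub]
    have h := hlow (x - y)
    have : (A⁻¹.toNNReal : ℝ) = A⁻¹ := Real.coe_toNNReal _ (by positivity)
    rw [this, le_inv_mul_iff₀ hA]
    exact h
  have hclosed : IsClosed (Set.range S) := hanti.isClosed_range S.uniformContinuous
  have hrange_closed : IsClosed ((LinearMap.range (S : H →ₗ[ℂ] H) : Submodule ℂ H) : Set H) := by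
    simpa [LinearMap.coe_range] using hclosed
  haveI : CompleteSpace (LinearMap.range (S : H →ₗ[ℂ] H)) := hrange_closed.completeSpace_coe
  have hsurj : Function.Surjective S := by
    have : (LinearMap.range (S : H →ₗ[ℂ] H))ᗮ = ⊥ := by
      rw [Submodule.eq_bot_iff]
      intro y hy
      have hy' : ⟪S y, y⟫ = 0 := hy (S y) ⟨y, rfl⟩
      have := (hbounds y).1
      rw [hy'] at this
      simp only [Complex.zero_re] at this
      have h2 : ‖y‖ ^ 2 = 0 := le_antisymm (by nlinarith) (sq_nonneg _)
      have h3 : ‖y‖ = 0 := by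
        simpa using h2
      rwa [norm_eq_zero] at h3
    have htop : LinearMap.range (S : H →ₗ[ℂ] H) = ⊤ := Submodule.orthogonal_eq_bot_iff.mp this
    exact LinearMap.range_eq_top.mp htop
  exact ⟨hinj, hsurj⟩
end

section
/- Let F : Ω → H be an integral frame for a Hilbert space H with bounds A, B > 0, and let G : Ω → H be a map with ω ↦ ⟪x, G ω⟫ measurable for each x. Suppose there is a constant M > 0 such that for all x ∈ H, ∫_Ω |⟪x, F ω - G ω⟫|² dμ(ω) ≤ M · min(∫_Ω |⟪x, F ω⟫|² dμ(ω), ∫_Ω |⟪x, G ω⟫|² dμ(ω)). Then G is an integral frame for H: explicitly, (A / (1 + √M)²) ‖x‖² ≤ ∫_Ω |⟪x, G ω⟫|² dμ(ω) ≤ (1 + √M)² B ‖x‖² for all x ∈ H. -/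
open MeasureTheory
open scoped InnerProductSpace

local notation "⟪" x ", " y "⟫" => @inner ℂ _ _ x y

private lemma sqrt_integral_eq {Ω : Type*} [MeasurableSpace Ω] {μ : Measure Ω}
    {f : Ω → ℂ} (hf : MemLp f 2 μ) :
    eLpNorm f 2 μ = ENNReal.ofReal (Real.sqrt (∫ ω, ‖f ω‖ ^ 2 ∂μ)) := by
  rw [hf.eLpNorm_eq_integral_rpow_norm two_ne_zero ENNReal.ofNat_ne_top]
  have h2 : ((2 : ENNReal)).toReal = (2 : ℝ) := by norm_num
  rw [h2]
  congr 1
  rw [Real.sqrt_eq_rpow]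
  have heq : (∫ ω, ‖f ω‖ ^ (2 : ℝ) ∂μ) = ∫ ω, ‖f ω‖ ^ 2 ∂μ :=
    integral_congr_ae (ae_of_all _ fun ω => by norm_num [Real.rpow_natCast])
  rw [heq]
  norm_num

private lemma minkowski_sq {Ω : Type*} [MeasurableSpace Ω] {μ : Measure Ω}
    (f g : Ω → ℂ) (hf : Measurable f) (hg : Measurable g)
    (hif : Integrable (fun ω => ‖f ω‖ ^ 2) μ) (hig : Integrable (fun ω => ‖g ω‖ ^ 2) μ) :
    Real.sqrt (∫ ω, ‖f ω + g ω‖ ^ 2 ∂μ) ≤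
      Real.sqrt (∫ ω, ‖f ω‖ ^ 2 ∂μ) + Real.sqrt (∫ ω, ‖g ω‖ ^ 2 ∂μ) := by
  have hmf : MemLp f 2 μ :=
    (memLp_two_iff_integrable_sq_norm hf.aestronglyMeasurable).2 hif
  have hmg : MemLp g 2 μ :=
    (memLp_two_iff_integrable_sq_norm hg.aestronglyMeasurable).2 hig
  have hadd : MemLp (f + g) 2 μ := hmf.add hmg
  have h := eLpNorm_add_le hmf.aestronglyMeasurable hmg.aestronglyMeasurable
    (by norm_num : (1:ENNReal) ≤ 2)
  rw [sqrt_integral_eq hadd, sqrt_integral_eq hmf, sqrt_integral_eq hmg,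
    ← ENNReal.ofReal_add (Real.sqrt_nonneg _) (Real.sqrt_nonneg _)] at h
  have := (ENNReal.ofReal_le_ofReal_iff
    (add_nonneg (Real.sqrt_nonneg _) (Real.sqrt_nonneg _))).1 h
  simpa [Pi.add_apply] using this

/-- If `F` is an integral frame with bounds `A, B > 0` and `G` satisfies the perturbation
condition `∫ |⟪x, F ω - G ω⟫|² ≤ M min(∫ |⟪x, F ω⟫|², ∫ |⟪x, G ω⟫|²)`, then `G` is an
integral frame with bounds `A/(1+√M)²` and `(1+√M)² B`. -/
theorem integralFrame_perturbation_sufficient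
    {Ω : Type*} [MeasurableSpace Ω] (μ : Measure Ω)
    {H : Type*} [NormedAddCommGroup H] [InnerProductSpace ℂ H] [CompleteSpace H]
    (F G : Ω → H)
    (hmF : ∀ x : H, Measurable fun ω => ⟪x, F ω⟫)
    (hmG : ∀ x : H, Measurable fun ω => ⟪x, G ω⟫)
    (hiF : ∀ x : H, Integrable (fun ω => ‖⟪x, F ω⟫‖ ^ 2) μ)
    (hiG : ∀ x : H, Integrable (fun ω => ‖⟪x, G ω⟫‖ ^ 2) μ)
    (hiFG : ∀ x : H, Integrable (fun ω => ‖⟪x, F ω - G ω⟫‖ ^ 2) μ)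
    (A B : ℝ) (hA : 0 < A) (hB : 0 < B)
    (hframe : ∀ x : H,
      A * ‖x‖ ^ 2 ≤ ∫ ω, ‖⟪x, F ω⟫‖ ^ 2 ∂μ ∧
      (∫ ω, ‖⟪x, F ω⟫‖ ^ 2 ∂μ) ≤ B * ‖x‖ ^ 2)
    (M : ℝ) (hM : 0 < M)
    (hpert : ∀ x : H,
      (∫ ω, ‖⟪x, F ω - G ω⟫‖ ^ 2 ∂μ) ≤
        M * min (∫ ω, ‖⟪x, F ω⟫‖ ^ 2 ∂μ) (∫ ω, ‖⟪x, G ω⟫‖ ^ 2 ∂μ)) :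
    ∀ x : H,
      A / (1 + Real.sqrt M) ^ 2 * ‖x‖ ^ 2 ≤ ∫ ω, ‖⟪x, G ω⟫‖ ^ 2 ∂μ ∧
      (∫ ω, ‖⟪x, G ω⟫‖ ^ 2 ∂μ) ≤ (1 + Real.sqrt M) ^ 2 * B * ‖x‖ ^ 2 := by
  intro x
  set a := ∫ ω, ‖⟪x, F ω⟫‖ ^ 2 ∂μ with ha_def
  set g := ∫ ω, ‖⟪x, G ω⟫‖ ^ 2 ∂μ with hg_def
  set d := ∫ ω, ‖⟪x, F ω - G ω⟫‖ ^ 2 ∂μ with hd_def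
  have ha0 : 0 ≤ a := integral_nonneg fun ω => by positivity
  have hg0 : 0 ≤ g := integral_nonneg fun ω => by positivity
  have hd0 : 0 ≤ d := integral_nonneg fun ω => by positivity
  have hmFG : Measurable fun ω => ⟪x, F ω - G ω⟫ := by
    rw [show (fun ω => ⟪x, F ω - G ω⟫) = (fun ω => ⟪x, F ω⟫) - (fun ω => ⟪x, G ω⟫) from
      funext fun ω => inner_sub_right _ _ _]
    exact (hmF x).sub (hmG x)
  -- √a ≤ √g + √d
  have tri1 : Real.sqrt a ≤ Real.sqrt g + Real.sqrt d := by
    have := minkowski_sq (fun ω => ⟪x, G ω⟫) (fun ω => ⟪x, F ω - G ω⟫)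
      (hmG x) hmFG (hiG x) (hiFG x)
    have heq : (∫ ω, ‖⟪x, G ω⟫ + ⟪x, F ω - G ω⟫‖ ^ 2 ∂μ) = a := by
      rw [ha_def]
      refine integral_congr_ae (ae_of_all _ fun ω => ?_)
      simp [inner_sub_right]
    rwa [heq] at this
  -- √g ≤ √a + √d
  have tri2 : Real.sqrt g ≤ Real.sqrt a + Real.sqrt d := by
    have := minkowski_sq (fun ω => ⟪x, F ω⟫) (fun ω => -⟪x, F ω - G ω⟫)
      (hmF x) hmFG.neg (hiF x) (by simpa only [norm_neg] using hiFG x)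
    have heq : (∫ ω, ‖⟪x, F ω⟫ + -⟪x, F ω - G ω⟫‖ ^ 2 ∂μ) = g := by
      rw [hg_def]
      refine integral_congr_ae (ae_of_all _ fun ω => ?_)
      simp [inner_sub_right]
    have hneq : (∫ ω, ‖(-⟪x, F ω - G ω⟫ : ℂ)‖ ^ 2 ∂μ) = d := by
      rw [hd_def]; simp only [norm_neg]
    rwa [heq, hneq] at this
  have hda : Real.sqrt d ≤ Real.sqrt M * Real.sqrt a := by
    rw [← Real.sqrt_mul hM.le]
    exact Real.sqrt_le_sqrt ((hpert x).trans
      (mul_le_mul_of_nonneg_left (min_le_left _ _) hM.le))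
  have hdg : Real.sqrt d ≤ Real.sqrt M * Real.sqrt g := by
    rw [← Real.sqrt_mul hM.le]
    exact Real.sqrt_le_sqrt ((hpert x).trans
      (mul_le_mul_of_nonneg_left (min_le_right _ _) hM.le))
  set s := 1 + Real.sqrt M with hs_def
  have hs0 : 0 < s := by positivity
  -- upper bound: √g ≤ s √a, so g ≤ s² a ≤ s² B ‖x‖²
  have hub : g ≤ s ^ 2 * a := by
    have h1 : Real.sqrt g ≤ s * Real.sqrt a := by
      calc Real.sqrt g ≤ Real.sqrt a + Real.sqrt d := tri2
        _ ≤ Real.sqrt a + Real.sqrt M * Real.sqrt a := by linarith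
        _ = s * Real.sqrt a := by ring
    calc g = Real.sqrt g ^ 2 := (Real.sq_sqrt hg0).symm
      _ ≤ (s * Real.sqrt a) ^ 2 := by
          exact pow_le_pow_left₀ (Real.sqrt_nonneg _) h1 2
      _ = s ^ 2 * a := by rw [mul_pow, Real.sq_sqrt ha0]
  -- lower bound: √a ≤ s √g, so a ≤ s² g
  have hlb : a ≤ s ^ 2 * g := by
    have h1 : Real.sqrt a ≤ s * Real.sqrt g := by
      calc Real.sqrt a ≤ Real.sqrt g + Real.sqrt d := tri1
        _ ≤ Real.sqrt g + Real.sqrt M * Real.sqrt g := by linarith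
        _ = s * Real.sqrt g := by ring
    calc a = Real.sqrt a ^ 2 := (Real.sq_sqrt ha0).symm
      _ ≤ (s * Real.sqrt g) ^ 2 := by
          exact pow_le_pow_left₀ (Real.sqrt_nonneg _) h1 2
      _ = s ^ 2 * g := by rw [mul_pow, Real.sq_sqrt hg0]
  obtain ⟨hfl, hfu⟩ := hframe x
  constructor
  · rw [div_mul_eq_mul_div, div_le_iff₀ (by positivity)]
    calc A * ‖x‖ ^ 2 ≤ a := hfl
      _ ≤ s ^ 2 * g := hlb
      _ = g * s ^ 2 := by ring
  · calc g ≤ s ^ 2 * a := hub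
      _ ≤ s ^ 2 * (B * ‖x‖ ^ 2) := by
          exact mul_le_mul_of_nonneg_left hfu (by positivity)
      _ = s ^ 2 * B * ‖x‖ ^ 2 := by ring
end

section
/- Let H be a Hilbert space and F : Ω → H an integral frame with bounds A, B and frame operator S. Then ω ↦ S⁻¹(F ω) (the canonical dual frame) is an integral frame with bounds 1/B and 1/A, and its frame operator is S⁻¹. -/
open MeasureTheory ContinuousLinearMap
open scoped InnerProductSpace

local notation "⟪" x ", " y "⟫" => @inner ℂ _ _ x y

/-- If `F` is an integral frame with bounds `A, B` and frame operator `S`, then the canonical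
dual frame `ω ↦ S⁻¹ (F ω)` is an integral frame with bounds `1/B` and `1/A`, and its frame
operator is `S⁻¹`. -/
theorem integralFrame_canonical_dual
    {Ω : Type*} [MeasurableSpace Ω] (μ : Measure Ω)
    {H : Type*} [NormedAddCommGroup H] [InnerProductSpace ℂ H] [CompleteSpace H]
    (F : Ω → H) (hmeas : ∀ x : H, Measurable fun ω => ⟪x, F ω⟫)
    (A B : ℝ) (hA : 0 < A) (hB : 0 < B)
    (hframe : ∀ x : H,
      A * ‖x‖ ^ 2 ≤ ∫ ω, ‖⟪x, F ω⟫‖ ^ 2 ∂μ ∧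
      (∫ ω, ‖⟪x, F ω⟫‖ ^ 2 ∂μ) ≤ B * ‖x‖ ^ 2)
    (S : H →L[ℂ] H)
    (hS : ∀ x y : H, ⟪S x, y⟫ = ∫ ω, ⟪x, F ω⟫ * ⟪F ω, y⟫ ∂μ)
    (Sinv : H →L[ℂ] H)
    (hS₁ : Sinv ∘L S = ContinuousLinearMap.id ℂ H)
    (hS₂ : S ∘L Sinv = ContinuousLinearMap.id ℂ H) :
    (∀ x : H,
      (1 / B) * ‖x‖ ^ 2 ≤ ∫ ω, ‖⟪x, Sinv (F ω)⟫‖ ^ 2 ∂μ ∧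
      (∫ ω, ‖⟪x, Sinv (F ω)⟫‖ ^ 2 ∂μ) ≤ (1 / A) * ‖x‖ ^ 2) ∧
    ∀ x y : H, (∫ ω, ⟪x, Sinv (F ω)⟫ * ⟪Sinv (F ω), y⟫ ∂μ) = ⟪Sinv x, y⟫ := by
  -- S ∘ Sinv = id pointwise
  have hSS : ∀ x : H, S (Sinv x) = x := fun x => by
    have := congrArg (fun T : H →L[ℂ] H => T x) hS₂
    simpa using this
  -- S is self-adjoint
  have hSsa : ∀ a b : H, ⟪S a, b⟫ = ⟪a, S b⟫ := by
    intro a b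
    calc ⟪S a, b⟫ = ∫ ω, ⟪a, F ω⟫ * ⟪F ω, b⟫ ∂μ := hS a b
      _ = ∫ ω, (starRingEnd ℂ) (⟪b, F ω⟫ * ⟪F ω, a⟫) ∂μ := by
          congr 1; funext ω
          rw [map_mul, inner_conj_symm, inner_conj_symm]; ring
      _ = (starRingEnd ℂ) (∫ ω, ⟪b, F ω⟫ * ⟪F ω, a⟫ ∂μ) := integral_conj
      _ = (starRingEnd ℂ) ⟪S b, a⟫ := by rw [hS]
      _ = ⟪a, S b⟫ := inner_conj_symm _ _
  -- Sinv is self-adjoint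
  have hIsa : ∀ a b : H, ⟪Sinv a, b⟫ = ⟪a, Sinv b⟫ := by
    intro a b
    conv_lhs => rw [← hSS b]
    rw [← hSsa, hSS]
  -- key pointwise identity
  have hkey : ∀ (x : H) (ω : Ω), ⟪x, Sinv (F ω)⟫ = ⟪Sinv x, F ω⟫ := fun x ω =>
    (hIsa x (F ω)).symm
  -- ⟪S y, y⟫ is the (real) frame integral
  have hSyy : ∀ y : H, ⟪S y, y⟫ = ((∫ ω, ‖⟪y, F ω⟫‖ ^ 2 ∂μ : ℝ) : ℂ) := by
    intro y
    calc ⟪S y, y⟫ = ∫ ω, ⟪y, F ω⟫ * ⟪F ω, y⟫ ∂μ := hS y y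
      _ = ∫ ω, ((‖⟪y, F ω⟫‖ ^ 2 : ℝ) : ℂ) ∂μ := by
          congr 1; funext ω
          rw [← inner_conj_symm (F ω) y, RCLike.mul_conj]
          norm_cast
      _ = ((∫ ω, ‖⟪y, F ω⟫‖ ^ 2 ∂μ : ℝ) : ℂ) :=
          integral_ofReal (f := fun ω => ‖⟪y, F ω⟫‖ ^ 2)
  constructor
  · intro x
    set y := Sinv x with hy
    -- rewrite the target integral
    have hEq : (∫ ω, ‖⟪x, Sinv (F ω)⟫‖ ^ 2 ∂μ) = ∫ ω, ‖⟪y, F ω⟫‖ ^ 2 ∂μ := by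
      congr 1; funext ω; rw [hkey]
    set I := ∫ ω, ‖⟪y, F ω⟫‖ ^ 2 ∂μ with hI
    have hfr := hframe y
    have hSyx : S y = x := hSS x
    have hIre : I = Complex.re ⟪x, y⟫ := by
      have h := hSyy y
      rw [hSyx] at h
      rw [h, Complex.ofReal_re]
    -- upper bound: I ≤ (1/A) ‖x‖²
    have hup : I ≤ (1 / A) * ‖x‖ ^ 2 := by
      have h1 : Complex.re ⟪x, y⟫ ≤ ‖x‖ * ‖y‖ := re_inner_le_norm (𝕜 := ℂ) x y
      have h2 : A * ‖y‖ ^ 2 ≤ I := hfr.1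
      have hIle : I ≤ ‖x‖ * ‖y‖ := by rw [hIre]; exact h1
      have hAinv : A * (1 / A) = 1 := mul_one_div_cancel hA.ne'
      nlinarith [sq_nonneg (‖x‖ - A * ‖y‖), norm_nonneg x, norm_nonneg y,
        mul_le_mul_of_nonneg_left hIle hA.le, mul_le_mul_of_nonneg_left h2 hA.le]
    -- lower bound
    have hlow : (1 / B) * ‖x‖ ^ 2 ≤ I := by
      set J := ∫ ω, ‖⟪x, F ω⟫‖ ^ 2 ∂μ with hJ
      have hJB : J ≤ B * ‖x‖ ^ 2 := (hframe x).2
      -- integrability of the squared coefficient functions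
      have hInt : ∀ z : H, Integrable (fun ω => ‖⟪z, F ω⟫‖ ^ 2) μ := by
        intro z
        by_contra hni
        have h0 : (∫ ω, ‖⟪z, F ω⟫‖ ^ 2 ∂μ) = 0 := integral_undef hni
        have := (hframe z).1
        rw [h0] at this
        have hz : z = 0 := by
          have : ‖z‖ ^ 2 ≤ 0 := by nlinarith
          have : ‖z‖ = 0 := by nlinarith [sq_nonneg ‖z‖, norm_nonneg z]
          simpa [norm_eq_zero] using this
        apply hni
        simp [hz]
      have hIntI := hInt y
      have hIntJ := hInt x
      -- ‖x‖² = re ⟪S y, x⟫ = re ∫ ⟪y,Fω⟫⟪Fω,x⟫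
      have hx2 : (‖x‖ : ℝ) ^ 2 = Complex.re (∫ ω, ⟪y, F ω⟫ * ⟪F ω, x⟫ ∂μ) := by
        rw [← hS y x, hSyx]
        exact (inner_self_eq_norm_sq (𝕜 := ℂ) x).symm
      -- bound re of the integral by ∫ ‖f‖‖g‖
      have hb1 : Complex.re (∫ ω, ⟪y, F ω⟫ * ⟪F ω, x⟫ ∂μ)
          ≤ ∫ ω, ‖⟪y, F ω⟫‖ * ‖⟪F ω, x⟫‖ ∂μ := by
        calc Complex.re (∫ ω, ⟪y, F ω⟫ * ⟪F ω, x⟫ ∂μ)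
            ≤ ‖∫ ω, ⟪y, F ω⟫ * ⟪F ω, x⟫ ∂μ‖ := Complex.re_le_norm _
          _ ≤ ∫ ω, ‖⟪y, F ω⟫ * ⟪F ω, x⟫‖ ∂μ := norm_integral_le_integral_norm _
          _ = ∫ ω, ‖⟪y, F ω⟫‖ * ‖⟪F ω, x⟫‖ ∂μ := by
              congr 1; funext ω; rw [norm_mul]
      -- AM–GM pointwise with weight B
      have hptwise : ∀ ω, ‖⟪y, F ω⟫‖ * ‖⟪F ω, x⟫‖
          ≤ (B * ‖⟪y, F ω⟫‖ ^ 2 + (1 / B) * ‖⟪x, F ω⟫‖ ^ 2) / 2 := by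
        intro ω
        have hn : ‖⟪F ω, x⟫‖ = ‖⟪x, F ω⟫‖ := by
          rw [← inner_conj_symm x (F ω), RCLike.norm_conj]
        rw [hn]
        set u := ‖⟪y, F ω⟫‖
        set v := ‖⟪x, F ω⟫‖
        have h2 : u * v ≤ (B ^ 2 * u ^ 2 + v ^ 2) / (2 * B) := by
          rw [le_div_iff₀ (by positivity)]
          nlinarith [sq_nonneg (B * u - v)]
        have h3 : (B ^ 2 * u ^ 2 + v ^ 2) / (2 * B) = (B * u ^ 2 + (1 / B) * v ^ 2) / 2 := by
          field_simp
        rw [h3] at h2; exact h2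
      -- integrability of the product
      have hprodmeas : AEStronglyMeasurable (fun ω => ‖⟪y, F ω⟫‖ * ‖⟪F ω, x⟫‖) μ := by
        apply AEStronglyMeasurable.mul
        · exact ((hmeas y).norm).aestronglyMeasurable
        · have : Measurable fun ω => ‖⟪x, F ω⟫‖ := (hmeas x).norm
          have heq : (fun ω => ‖⟪F ω, x⟫‖) = fun ω => ‖⟪x, F ω⟫‖ := by
            funext ω; rw [← inner_conj_symm x (F ω), RCLike.norm_conj]
          rw [heq]
          exact this.aestronglyMeasurable
      have hbnd : Integrable
          (fun ω => (B * ‖⟪y, F ω⟫‖ ^ 2 + (1 / B) * ‖⟪x, F ω⟫‖ ^ 2) / 2) μ :=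
        ((hIntI.const_mul B).add (hIntJ.const_mul (1 / B))).div_const 2
      have hprodint : Integrable (fun ω => ‖⟪y, F ω⟫‖ * ‖⟪F ω, x⟫‖) μ := by
        apply hbnd.mono' hprodmeas
        filter_upwards with ω
        rw [Real.norm_eq_abs, abs_of_nonneg (by positivity)]
        exact hptwise ω
      have hb2 : (∫ ω, ‖⟪y, F ω⟫‖ * ‖⟪F ω, x⟫‖ ∂μ)
          ≤ ∫ ω, (B * ‖⟪y, F ω⟫‖ ^ 2 + (1 / B) * ‖⟪x, F ω⟫‖ ^ 2) / 2 ∂μ :=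
        integral_mono hprodint hbnd hptwise
      have hb3 : (∫ ω, (B * ‖⟪y, F ω⟫‖ ^ 2 + (1 / B) * ‖⟪x, F ω⟫‖ ^ 2) / 2 ∂μ)
          = (B * I + (1 / B) * J) / 2 := by
        rw [integral_div, integral_add (hIntI.const_mul B) (hIntJ.const_mul (1 / B)),
          integral_const_mul, integral_const_mul]
      have : ‖x‖ ^ 2 ≤ (B * I + (1 / B) * J) / 2 := by
        rw [hx2]
        calc Complex.re (∫ ω, ⟪y, F ω⟫ * ⟪F ω, x⟫ ∂μ)
            ≤ ∫ ω, ‖⟪y, F ω⟫‖ * ‖⟪F ω, x⟫‖ ∂μ := hb1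
          _ ≤ _ := hb3 ▸ hb2
      have hBJ : (1 / B) * J ≤ ‖x‖ ^ 2 := by
        rw [div_mul_eq_mul_div, mul_comm]
        exact (div_le_iff₀ hB).2 (by linarith [hJB])
      -- ‖x‖² ≤ (B I + ‖x‖²)/2 ⟹ ‖x‖² ≤ B I
      have : ‖x‖ ^ 2 ≤ B * I := by linarith
      rw [div_mul_eq_mul_div, div_le_iff₀ hB]
      linarith
    rw [hEq]
    exact ⟨hlow, hup⟩
  · intro x y
    calc (∫ ω, ⟪x, Sinv (F ω)⟫ * ⟪Sinv (F ω), y⟫ ∂μ)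
        = ∫ ω, ⟪Sinv x, F ω⟫ * ⟪F ω, Sinv y⟫ ∂μ := by
          congr 1; funext ω
          rw [hkey x ω, hIsa (F ω) y]
      _ = ⟪S (Sinv x), Sinv y⟫ := (hS _ _).symm
      _ = ⟪x, Sinv y⟫ := by rw [hSS]
      _ = ⟪Sinv x, y⟫ := (hIsa x y).symm
end
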